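/- Let H be an n×n invertible Hermitian complex matrix and let t be a real number. Then for all n×n complex matrices X and Y, tr((exp(-itH)·X)ᴴ · H⁻² · (exp(-itH)·Y)) = tr(Xᴴ·H⁻²·Y). In particular, g_H(exp(-itH)·X, exp(-itH)·Y) = g_H(X,Y), i.e. the flow φ_t(W) = exp(-itH)·W of the Hamiltonian vector field h_W = -iHW is an isometry of the dynamic metric g_H, so h is a Killing vector field. -/

import Mathlib

open Matrix

/-- The dynamic metric `g_H(X,Y) = (1/2)·tr(Xᴴ H⁻² Y + Yᴴ H⁻² X)`. -/
noncomputable def gH {n : ℕ} (H X Y : Matrix (Fin n) (Fin n) ℂ) : ℂ :=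
  (1 / 2 : ℂ) * (Xᴴ * (H⁻¹ * H⁻¹) * Y + Yᴴ * (H⁻¹ * H⁻¹) * X).trace

/-- The flow `φ_t(W) = exp(-itH)·W` of the Hamiltonian vector field `h_W = -iHW`
is an isometry of the dynamic metric `g_H`, i.e. `h` is a Killing vector field. -/
theorem hamiltonian_flow_isometry {n : ℕ} (H : Matrix (Fin n) (Fin n) ℂ)
    (hH : H.IsHermitian) (hHinv : IsUnit H.det) (t : ℝ)
    (X Y : Matrix (Fin n) (Fin n) ℂ) :
    ((NormedSpace.exp ((-(t : ℂ) * Complex.I) • H) * X)ᴴ * (H⁻¹ * H⁻¹) *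
        (NormedSpace.exp ((-(t : ℂ) * Complex.I) • H) * Y)).trace
      = (Xᴴ * (H⁻¹ * H⁻¹) * Y).trace ∧
    gH H (NormedSpace.exp ((-(t : ℂ) * Complex.I) • H) * X)
        (NormedSpace.exp ((-(t : ℂ) * Complex.I) • H) * Y) = gH H X Y := by
  have hHu : IsUnit H := (Matrix.isUnit_iff_isUnit_det H).mpr hHinv
  set U := NormedSpace.exp ((-(t : ℂ) * Complex.I) • H) with hUdef
  -- Uᴴ = exp((t·i)•H)
  have hUH : Uᴴ = NormedSpace.exp (((t : ℂ) * Complex.I) • H) := by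
    rw [hUdef, ← Matrix.exp_conjTranspose, conjTranspose_smul, hH.eq]
    congr 1
    simp only [Complex.star_def, _root_.map_neg, _root_.map_mul, Complex.conj_ofReal,
      Complex.conj_I, mul_neg, neg_mul, neg_neg]
  -- key commutation: for any scalar c, H⁻¹ commutes with exp(c•H)
  have hcomm : ∀ c : ℂ, H⁻¹ * NormedSpace.exp (c • H) =
      NormedSpace.exp (c • H) * H⁻¹ := by
    intro c
    have h1 : H⁻¹ * (c • H) * H = c • H := by
      rw [Matrix.mul_smul, Matrix.smul_mul, Matrix.nonsing_inv_mul H hHinv, one_mul]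
    have h2 := Matrix.exp_conj' H (c • H) hHu
    rw [h1] at h2
    calc H⁻¹ * NormedSpace.exp (c • H)
        = H⁻¹ * NormedSpace.exp (c • H) * H * H⁻¹ := by
          rw [Matrix.mul_assoc _ H H⁻¹, Matrix.mul_nonsing_inv H hHinv, Matrix.mul_one]
      _ = NormedSpace.exp (c • H) * H⁻¹ := by rw [← h2]
  -- Uᴴ commutes with H⁻¹ * H⁻¹
  have hcomm2 : Uᴴ * (H⁻¹ * H⁻¹) = (H⁻¹ * H⁻¹) * Uᴴ := by
    rw [hUH, ← Matrix.mul_assoc, ← hcomm, Matrix.mul_assoc, ← hcomm, Matrix.mul_assoc]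
  -- Uᴴ * U = 1
  have hUU : Uᴴ * U = 1 := by
    rw [hUH, hUdef, ← Matrix.exp_add_of_commute]
    · rw [← add_smul]
      have : (t : ℂ) * Complex.I + -(t : ℂ) * Complex.I = 0 := by ring
      rw [this, zero_smul, NormedSpace.exp_zero]
    · exact (Commute.refl H).smul_left _ |>.smul_right _
  -- main matrix identity
  have key : (U * X)ᴴ * (H⁻¹ * H⁻¹) * (U * Y) = Xᴴ * (H⁻¹ * H⁻¹) * Y := by
    calc (U * X)ᴴ * (H⁻¹ * H⁻¹) * (U * Y)
        = Xᴴ * (Uᴴ * (H⁻¹ * H⁻¹)) * (U * Y) := by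
          rw [conjTranspose_mul, Matrix.mul_assoc Xᴴ]
      _ = Xᴴ * ((H⁻¹ * H⁻¹) * Uᴴ) * (U * Y) := by rw [hcomm2]
      _ = Xᴴ * (H⁻¹ * H⁻¹) * ((Uᴴ * U) * Y) := by
          simp only [Matrix.mul_assoc]
      _ = Xᴴ * (H⁻¹ * H⁻¹) * Y := by rw [hUU, Matrix.one_mul]
  have key' : (U * Y)ᴴ * (H⁻¹ * H⁻¹) * (U * X) = Yᴴ * (H⁻¹ * H⁻¹) * X := by
    calc (U * Y)ᴴ * (H⁻¹ * H⁻¹) * (U * X)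
        = Yᴴ * (Uᴴ * (H⁻¹ * H⁻¹)) * (U * X) := by
          rw [conjTranspose_mul, Matrix.mul_assoc Yᴴ]
      _ = Yᴴ * ((H⁻¹ * H⁻¹) * Uᴴ) * (U * X) := by rw [hcomm2]
      _ = Yᴴ * (H⁻¹ * H⁻¹) * ((Uᴴ * U) * X) := by
          simp only [Matrix.mul_assoc]
      _ = Yᴴ * (H⁻¹ * H⁻¹) * X := by rw [hUU, Matrix.one_mul]
  refine ⟨by rw [key], ?_⟩
  unfold gH
  rw [key, key']
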